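/- arXiv:2210.16677 — 4 statements merged into one kernel-verified Lean document; each statement's English description precedes it below -/
import Mathlib

section
/- Fix ε > 0 and let γ₁(t) = (sin(εt), cos(εt), 0) and γ₂(s) = (0, ε cos s + 1, ε sin s). Then for all real s and t, ((γ₁'(t) × γ₂'(s)) · (γ₁(t) − γ₂(s))) / ‖γ₁(t) − γ₂(s)‖³ = ε²(cos s·(cos(εt) − 1) + ε cos(εt)) / (2 + ε² − 2cos(εt) + 4ε cos s · sin²(εt/2))^{3/2}, provided the denominator 2 + ε² − 2cos(εt) + 4ε cos s · sin²(εt/2) is nonzero. -/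
open Real MeasureTheory
open scoped RealInnerProductSpace

/-- A vector in `ℝ³` (with the Euclidean norm) given by its three components. -/
noncomputable def vec3 (x y z : ℝ) : EuclideanSpace ℝ (Fin 3) :=
  (WithLp.equiv 2 (Fin 3 → ℝ)).symm ![x, y, z]

/-- The cross product of two vectors in `ℝ³`. -/
noncomputable def cross3 (a b : EuclideanSpace ℝ (Fin 3)) : EuclideanSpace ℝ (Fin 3) :=
  vec3 (a 1 * b 2 - a 2 * b 1) (a 2 * b 0 - a 0 * b 2) (a 0 * b 1 - a 1 * b 0)

theorem hasDerivAt_vec3 {f₀ f₁ f₂ : ℝ → ℝ} {g₀ g₁ g₂ : ℝ} {u : ℝ}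
    (h₀ : HasDerivAt f₀ g₀ u) (h₁ : HasDerivAt f₁ g₁ u) (h₂ : HasDerivAt f₂ g₂ u) :
    HasDerivAt (fun x => vec3 (f₀ x) (f₁ x) (f₂ x)) (vec3 g₀ g₁ g₂) u := by
  have h : HasDerivAt (fun x => ![f₀ x, f₁ x, f₂ x] : ℝ → (Fin 3 → ℝ)) ![g₀, g₁, g₂] u := by
    rw [hasDerivAt_pi]
    intro i
    fin_cases i
    · exact h₀
    · exact h₁
    · exact h₂
  have := ((PiLp.continuousLinearEquiv 2 ℝ (fun _ : Fin 3 => ℝ)).symm :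
      (Fin 3 → ℝ) →L[ℝ] EuclideanSpace ℝ (Fin 3)).hasFDerivAt.comp_hasDerivAt u h
  simpa [vec3, Function.comp_def] using this

theorem gauss_integrand_hopf_link (ε : ℝ) (hε : 0 < ε)
    (γ₁ : ℝ → EuclideanSpace ℝ (Fin 3)) (γ₂ : ℝ → EuclideanSpace ℝ (Fin 3))
    (hγ₁ : γ₁ = fun t => vec3 (Real.sin (ε * t)) (Real.cos (ε * t)) 0)
    (hγ₂ : γ₂ = fun s => vec3 0 (ε * Real.cos s + 1) (ε * Real.sin s))
    (t s : ℝ)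
    (hden : 2 + ε ^ 2 - 2 * Real.cos (ε * t)
        + 4 * ε * Real.cos s * Real.sin (ε * t / 2) ^ 2 ≠ 0) :
    ⟪cross3 (deriv γ₁ t) (deriv γ₂ s), γ₁ t - γ₂ s⟫ / ‖γ₁ t - γ₂ s‖ ^ 3
      = ε ^ 2 * (Real.cos s * (Real.cos (ε * t) - 1) + ε * Real.cos (ε * t))
        / (2 + ε ^ 2 - 2 * Real.cos (ε * t)
            + 4 * ε * Real.cos s * Real.sin (ε * t / 2) ^ 2) ^ ((3 : ℝ) / 2) := by
  subst hγ₁ hγ₂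
  set D : ℝ := 2 + ε ^ 2 - 2 * Real.cos (ε * t)
      + 4 * ε * Real.cos s * Real.sin (ε * t / 2) ^ 2 with hD
  have hmul : ∀ u : ℝ, HasDerivAt (fun x : ℝ => ε * x) ε u := fun u => by
    simpa using (hasDerivAt_id u).const_mul ε
  have d1 : HasDerivAt (fun t => vec3 (Real.sin (ε * t)) (Real.cos (ε * t)) 0)
      (vec3 (ε * Real.cos (ε * t)) (-(ε * Real.sin (ε * t))) 0) t := by
    refine hasDerivAt_vec3 ?_ ?_ (hasDerivAt_const t 0)
    · simpa [mul_comm, Function.comp_def] using (Real.hasDerivAt_sin (ε * t)).comp t (hmul t)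
    · simpa [mul_comm, Function.comp_def] using (Real.hasDerivAt_cos (ε * t)).comp t (hmul t)
  have d2 : HasDerivAt (fun s => vec3 0 (ε * Real.cos s + 1) (ε * Real.sin s))
      (vec3 0 (-(ε * Real.sin s)) (ε * Real.cos s)) s := by
    refine hasDerivAt_vec3 (hasDerivAt_const s 0) ?_ ?_
    · simpa [mul_comm] using (((Real.hasDerivAt_cos s).const_mul ε).add_const 1)
    · simpa [mul_comm] using ((Real.hasDerivAt_sin s).const_mul ε)
  rw [d1.deriv, d2.deriv]
  have hp1 := Real.sin_sq_add_cos_sq (ε * t)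
  have hp2 := Real.sin_sq_add_cos_sq s
  have hp3 : Real.sin (ε * t / 2) ^ 2 = (1 - Real.cos (ε * t)) / 2 := by
    have h := Real.sin_sq_eq_half_sub (ε * t / 2)
    rw [show 2 * (ε * t / 2) = ε * t by ring] at h
    rw [h]; ring
  -- the squared norm of the difference equals D
  have hsum : (Real.sin (ε * t) - 0) ^ 2 + (Real.cos (ε * t) - (ε * Real.cos s + 1)) ^ 2
      + ((0 : ℝ) - ε * Real.sin s) ^ 2 = D := by
    rw [hD, hp3]; nlinarith [hp1, hp2]
  have hnorm : ‖(vec3 (Real.sin (ε * t)) (Real.cos (ε * t)) 0 :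
      EuclideanSpace ℝ (Fin 3)) - vec3 0 (ε * Real.cos s + 1) (ε * Real.sin s)‖
      = Real.sqrt D := by
    rw [EuclideanSpace.norm_eq]
    congr 1
    simp only [Fin.sum_univ_three, Real.norm_eq_abs, sq_abs]
    exact hsum
  have hDpos : 0 < D := by
    refine lt_of_le_of_ne ?_ (Ne.symm hden)
    rw [← hsum]; positivity
  have hpow : Real.sqrt D ^ 3 = D ^ ((3 : ℝ) / 2) := by
    rw [← Real.rpow_natCast (Real.sqrt D) 3, Real.sqrt_eq_rpow,
      ← Real.rpow_mul hDpos.le]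
    norm_num
  rw [hnorm, ← hpow]
  congr 1
  simp only [cross3, vec3, PiLp.inner_apply, Fin.sum_univ_three, PiLp.sub_apply,
    WithLp.equiv_symm_apply, PiLp.toLp_apply, Matrix.cons_val_zero, Matrix.cons_val_one, Matrix.head_cons,
    Matrix.cons_val_two, Matrix.tail_cons, RCLike.inner_apply, conj_trivial]
  linear_combination (-(ε ^ 2 * Real.cos s)) * hp1 + ε ^ 3 * Real.cos (ε * t) * hp2
end

section
/- As ε → 0⁺, the quantity (1/(4π)) ∫_{−π/ε}^{π/ε} ∫_{−π}^{π} ε²(cos s·(cos(εt) − 1) + ε cos(εt)) / (2 + ε² − 2cos(εt) + 4ε cos s · sin²(εt/2))^{3/2} ds dt tends to 1. (The Gauss linking integral of the ε-parametrized Hopf link tends to 1 as the second circle shrinks: the framing-one configuration.) -/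
open Real Filter MeasureTheory
open scoped Topology


noncomputable def hopfF (ε t s : ℝ) : ℝ :=
  ε ^ 2 * (Real.cos s * (Real.cos (ε * t) - 1) + ε * Real.cos (ε * t))
    / (2 + ε ^ 2 - 2 * Real.cos (ε * t)
        + 4 * ε * Real.cos s * Real.sin (ε * t / 2) ^ 2) ^ ((3 : ℝ) / 2)

lemma hopf_den_eq (ε t s : ℝ) :
    2 + ε ^ 2 - 2 * Real.cos (ε * t) + 4 * ε * Real.cos s * Real.sin (ε * t / 2) ^ 2
      = ε ^ 2 + 4 * Real.sin (ε * t / 2) ^ 2 * (1 + ε * Real.cos s) := by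
  have h : Real.cos (ε * t) = 1 - 2 * Real.sin (ε * t / 2) ^ 2 := by
    have := Real.sin_sq_eq_half_sub (ε * t / 2)
    rw [show 2 * (ε * t / 2) = ε * t by ring] at this
    linarith
  rw [h]; ring

lemma hopf_base_pos {ε : ℝ} (hε : 0 < ε) (hε1 : ε ≤ 1) (t s : ℝ) :
    0 < ε ^ 2 + 4 * Real.sin (ε * t / 2) ^ 2 * (1 + ε * Real.cos s) := by
  have h1 : -1 ≤ Real.cos s := Real.neg_one_le_cos s
  have h2 : (0:ℝ) ≤ Real.sin (ε * t / 2) ^ 2 := sq_nonneg _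
  have h3 : (0:ℝ) ≤ 1 + ε * Real.cos s := by nlinarith
  nlinarith [mul_nonneg (mul_nonneg (by norm_num : (0:ℝ) ≤ 4) h2) h3]

lemma rpow_three_halves {x : ℝ} (hx : 0 ≤ x) :
    x ^ ((3 : ℝ) / 2) = x * Real.sqrt x := by
  rw [Real.sqrt_eq_rpow, show (3:ℝ)/2 = 1 + 1/2 by norm_num,
    Real.rpow_add' hx (by norm_num), Real.rpow_one]

lemma sq_rpow_three_halves {ε : ℝ} (hε : 0 ≤ ε) :
    ((ε ^ 2 : ℝ)) ^ ((3 : ℝ) / 2) = ε ^ 3 := by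
  rw [← Real.rpow_natCast ε 2, ← Real.rpow_mul hε, ← Real.rpow_natCast ε 3]
  norm_num

lemma hopf_slope_sin (t : ℝ) :
    Tendsto (fun ε : ℝ => Real.sin (ε * t / 2) / ε) (𝓝[>] 0) (𝓝 (t / 2)) := by
  have hd : HasDerivAt (fun ε : ℝ => Real.sin (ε * t / 2)) (t / 2) 0 := by
    have h1 : HasDerivAt (fun ε : ℝ => ε * t / 2) (t / 2) 0 := by
      simpa [mul_div_assoc] using (hasDerivAt_id (0:ℝ)).mul_const (t/2)
    have h2 := (Real.hasDerivAt_sin (0 * t / 2)).comp 0 h1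
    simpa [Function.comp_def] using h2
  have h3 := hasDerivAt_iff_tendsto_slope.mp hd
  have h4 : Tendsto (slope (fun ε : ℝ => Real.sin (ε * t / 2)) 0) (𝓝[>] 0) (𝓝 (t/2)) :=
    h3.mono_left (nhdsWithin_mono 0 (fun x hx => ne_of_gt hx))
  refine h4.congr (fun ε => ?_)
  simp [slope_def_field]

lemma hopf_slope_cos (t : ℝ) :
    Tendsto (fun ε : ℝ => (Real.cos (ε * t) - 1) / ε) (𝓝[>] 0) (𝓝 0) := by
  have hd : HasDerivAt (fun ε : ℝ => Real.cos (ε * t)) 0 0 := by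
    have h1 : HasDerivAt (fun ε : ℝ => ε * t) t 0 := by
      simpa using (hasDerivAt_id (0:ℝ)).mul_const t
    have h2 := (Real.hasDerivAt_cos (0 * t)).comp 0 h1
    simpa [Function.comp_def] using h2
  have h3 := hasDerivAt_iff_tendsto_slope.mp hd
  have h4 : Tendsto (slope (fun ε : ℝ => Real.cos (ε * t)) 0) (𝓝[>] 0) (𝓝 0) :=
    h3.mono_left (nhdsWithin_mono 0 (fun x hx => ne_of_gt hx))
  refine h4.congr (fun ε => ?_)
  simp [slope_def_field]

lemma hopf_pointwise (t s : ℝ) :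
    Tendsto (fun ε : ℝ => hopfF ε t s) (𝓝[>] 0)
      (𝓝 (((1 + t ^ 2) * Real.sqrt (1 + t ^ 2))⁻¹)) := by
  have hq := hopf_slope_sin t
  have hr := hopf_slope_cos t
  have hcos : Tendsto (fun ε : ℝ => Real.cos (ε * t)) (𝓝[>] 0) (𝓝 1) := by
    have hc : Continuous fun ε : ℝ => Real.cos (ε * t) := by continuity
    simpa using (hc.tendsto 0).mono_left nhdsWithin_le_nhds
  have hn : Tendsto (fun ε : ℝ => Real.cos s * ((Real.cos (ε * t) - 1) / ε) + Real.cos (ε * t))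
      (𝓝[>] 0) (𝓝 1) := by
    simpa using ((hr.const_mul (Real.cos s)).add hcos)
  have hεc : Tendsto (fun ε : ℝ => 1 + ε * Real.cos s) (𝓝[>] 0) (𝓝 1) := by
    have hc : Continuous fun ε : ℝ => 1 + ε * Real.cos s := by continuity
    simpa using (hc.tendsto 0).mono_left nhdsWithin_le_nhds
  have hb : Tendsto (fun ε : ℝ => 1 + 4 * (Real.sin (ε * t / 2) / ε) ^ 2 * (1 + ε * Real.cos s))
      (𝓝[>] 0) (𝓝 (1 + t ^ 2)) := by
    have h1 := ((hq.pow 2).const_mul 4).mul hεc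
    have h2 := h1.const_add 1
    have : 1 + 4 * (t / 2) ^ 2 * 1 = 1 + t ^ 2 := by ring
    rwa [this] at h2
  have hbp : (0:ℝ) < 1 + t ^ 2 := by positivity
  have hden : Tendsto
      (fun ε : ℝ => (1 + 4 * (Real.sin (ε * t / 2) / ε) ^ 2 * (1 + ε * Real.cos s)) ^ ((3:ℝ)/2))
      (𝓝[>] 0) (𝓝 ((1 + t ^ 2) ^ ((3:ℝ)/2))) :=
    hb.rpow_const (Or.inr (by norm_num))
  have hlim := hn.div hden (ne_of_gt (Real.rpow_pos_of_pos hbp _))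
  have hval : (1:ℝ) / (1 + t ^ 2) ^ ((3:ℝ)/2) = ((1 + t ^ 2) * Real.sqrt (1 + t ^ 2))⁻¹ := by
    rw [rpow_three_halves hbp.le, one_div]
  rw [hval] at hlim
  refine hlim.congr' ?_
  filter_upwards [Ioo_mem_nhdsGT_of_mem (by norm_num : (0:ℝ) ∈ Set.Ico (0:ℝ) 1)] with ε hε
  obtain ⟨hε0, hε1⟩ := hε
  have hεne : ε ≠ 0 := ne_of_gt hε0
  have hc1 : (0:ℝ) ≤ 1 + ε * Real.cos s := by nlinarith [Real.neg_one_le_cos s]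
  have hbb : (0:ℝ) ≤ 1 + 4 * (Real.sin (ε * t / 2) / ε) ^ 2 * (1 + ε * Real.cos s) := by
    positivity
  rw [hopfF, hopf_den_eq]
  have hbase : ε ^ 2 + 4 * Real.sin (ε * t / 2) ^ 2 * (1 + ε * Real.cos s)
      = ε ^ 2 * (1 + 4 * (Real.sin (ε * t / 2) / ε) ^ 2 * (1 + ε * Real.cos s)) := by
    field_simp
  have hnum : ε ^ 2 * (Real.cos s * (Real.cos (ε * t) - 1) + ε * Real.cos (ε * t))
      = ε ^ 3 * (Real.cos s * ((Real.cos (ε * t) - 1) / ε) + Real.cos (ε * t)) := by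
    field_simp
  rw [hbase, hnum, Real.mul_rpow (sq_nonneg ε) hbb, sq_rpow_three_halves hε0.le,
    mul_div_mul_left _ _ (by positivity : (ε:ℝ) ^ 3 ≠ 0)]
  rfl

noncomputable def hopfBound (t : ℝ) : ℝ :=
  (1 + π * |t| / 2) / (((2:ℝ)/π^2) ^ ((3:ℝ)/2) * ((1 + t ^ 2) * Real.sqrt (1 + t ^ 2)))

set_option maxHeartbeats 1000000 in
lemma hopf_bound {ε t s : ℝ} (hε : 0 < ε) (hε2 : ε ≤ 1/2) (ht : ε * |t| ≤ π) :
    |hopfF ε t s| ≤ hopfBound t := by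
  have hπ : (3:ℝ) < π := Real.pi_gt_three
  have hπ0 : (0:ℝ) < π := by linarith
  set S := Real.sin (ε * t / 2) with hS
  set c := Real.cos s with hc
  have hc1 : -1 ≤ c := Real.neg_one_le_cos s
  have hc1' : c ≤ 1 := Real.cos_le_one s
  have habs : |ε * t / 2| = ε * |t| / 2 := by
    rw [abs_div, abs_mul, abs_of_pos hε]; simp
  have hS2lower : ε ^ 2 * t ^ 2 / π ^ 2 ≤ S ^ 2 := by
    have h1 : |ε * t / 2| ≤ π / 2 := by rw [habs]; linarith
    have h2 := Real.mul_abs_le_abs_sin (x := ε * t / 2) h1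
    have h3 : (2 / π * |ε * t / 2|) ^ 2 ≤ |S| ^ 2 :=
      pow_le_pow_left₀ (by positivity) h2 2
    have h4 : (2 / π * |ε * t / 2|) ^ 2 = ε ^ 2 * t ^ 2 / π ^ 2 := by
      rw [mul_pow, div_pow, sq_abs (ε * t / 2)]
      field_simp
    rw [h4, sq_abs] at h3
    exact h3
  have hS2upper : S ^ 2 ≤ ε ^ 2 * t ^ 2 / 4 := by
    have h2 : |S| ≤ |ε * t / 2| := Real.abs_sin_le_abs
    have h3 : |S| ^ 2 ≤ |ε * t / 2| ^ 2 := pow_le_pow_left₀ (abs_nonneg _) h2 2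
    rw [sq_abs, sq_abs] at h3
    calc S ^ 2 ≤ (ε * t / 2) ^ 2 := h3
      _ = ε ^ 2 * t ^ 2 / 4 := by ring
  have hcl : (1:ℝ)/2 ≤ 1 + ε * c := by nlinarith
  have hBlow : ε ^ 2 * (2 / π ^ 2 * (1 + t ^ 2)) ≤ ε ^ 2 + 4 * S ^ 2 * (1 + ε * c) := by
    have h4 : 4 * (ε ^ 2 * t ^ 2 / π ^ 2) * (1/2) ≤ 4 * S ^ 2 * (1 + ε * c) := by
      apply mul_le_mul (by nlinarith) hcl (by norm_num) (by positivity)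
    have hπ2 : (2:ℝ)/π^2 ≤ 1 := by
      rw [div_le_one (by positivity)]; nlinarith
    have h5 : ε ^ 2 * (2/π^2) ≤ ε ^ 2 := mul_le_of_le_one_right (sq_nonneg ε) hπ2
    have h6 : ε ^ 2 * (2/π^2 * (1 + t ^ 2)) = ε ^ 2 * (2/π^2) + (4 * (ε ^ 2 * t ^ 2 / π ^ 2) * (1/2)) := by
      ring
    linarith
  have hBlow0 : (0:ℝ) ≤ ε ^ 2 * (2 / π ^ 2 * (1 + t ^ 2)) := by positivity
  have hrpow : ε ^ 3 * (((2:ℝ)/π^2) ^ ((3:ℝ)/2) * ((1 + t ^ 2) * Real.sqrt (1 + t ^ 2)))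
      ≤ (ε ^ 2 + 4 * S ^ 2 * (1 + ε * c)) ^ ((3:ℝ)/2) := by
    have h1 := Real.rpow_le_rpow hBlow0 hBlow (by norm_num : (0:ℝ) ≤ 3/2)
    have h2 : (ε ^ 2 * (2 / π ^ 2 * (1 + t ^ 2))) ^ ((3:ℝ)/2)
        = ε ^ 3 * (((2:ℝ)/π^2) ^ ((3:ℝ)/2) * ((1 + t ^ 2) * Real.sqrt (1 + t ^ 2))) := by
      rw [Real.mul_rpow (sq_nonneg ε) (by positivity), sq_rpow_three_halves hε.le,
        Real.mul_rpow (by positivity) (by positivity),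
        rpow_three_halves (by positivity : (0:ℝ) ≤ 1 + t ^ 2)]
    rw [← h2]; exact h1
  have hcos1 : |Real.cos (ε * t) - 1| ≤ ε ^ 2 * t ^ 2 / 2 := by
    have h : Real.cos (ε * t) = 1 - 2 * S ^ 2 := by
      have h0 := Real.sin_sq_eq_half_sub (ε * t / 2)
      rw [show 2 * (ε * t / 2) = ε * t by ring] at h0
      rw [hS]; linarith
    rw [h, abs_of_nonpos (by nlinarith [sq_nonneg S])]
    linarith
  have h2t : ε * t ^ 2 ≤ π * |t| := by
    have h := mul_le_mul_of_nonneg_right ht (abs_nonneg t)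
    calc ε * t ^ 2 = ε * |t| * |t| := by rw [mul_assoc, abs_mul_abs_self t]; ring
      _ ≤ π * |t| := h
  have hnum : |ε ^ 2 * (c * (Real.cos (ε * t) - 1) + ε * Real.cos (ε * t))|
      ≤ ε ^ 3 * (1 + π * |t| / 2) := by
    have hca : |c * (Real.cos (ε * t) - 1)| ≤ |Real.cos (ε * t) - 1| := by
      rw [abs_mul]
      exact mul_le_of_le_one_left (abs_nonneg _) (Real.abs_cos_le_one s)
    have hεcos : |ε * Real.cos (ε * t)| ≤ ε := by
      rw [abs_mul, abs_of_pos hε]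
      exact mul_le_of_le_one_right hε.le (Real.abs_cos_le_one _)
    have h1 : |c * (Real.cos (ε * t) - 1) + ε * Real.cos (ε * t)|
        ≤ ε ^ 2 * t ^ 2 / 2 + ε := by
      calc |c * (Real.cos (ε * t) - 1) + ε * Real.cos (ε * t)|
          ≤ |c * (Real.cos (ε * t) - 1)| + |ε * Real.cos (ε * t)| := abs_add_le _ _
        _ ≤ ε ^ 2 * t ^ 2 / 2 + ε := by linarith
    calc |ε ^ 2 * (c * (Real.cos (ε * t) - 1) + ε * Real.cos (ε * t))|
        = ε ^ 2 * |c * (Real.cos (ε * t) - 1) + ε * Real.cos (ε * t)| := by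
          rw [abs_mul, abs_of_pos (by positivity : (0:ℝ) < ε ^ 2)]
      _ ≤ ε ^ 2 * (ε ^ 2 * t ^ 2 / 2 + ε) :=
          mul_le_mul_of_nonneg_left h1 (sq_nonneg ε)
      _ = ε ^ 3 * (ε * t ^ 2 / 2 + 1) := by ring
      _ ≤ ε ^ 3 * (1 + π * |t| / 2) := by
          apply mul_le_mul_of_nonneg_left (by linarith) (by positivity)
  rw [hopfF, hopf_den_eq, abs_div]
  have hBpos : (0:ℝ) < ε ^ 2 + 4 * S ^ 2 * (1 + ε * c) := by nlinarith [sq_nonneg S]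
  rw [abs_of_pos (Real.rpow_pos_of_pos hBpos ((3:ℝ)/2))]
  have hsq : (0:ℝ) < Real.sqrt (1 + t ^ 2) := Real.sqrt_pos.mpr (by positivity)
  have hK : (0:ℝ) < ((2:ℝ)/π^2) ^ ((3:ℝ)/2) := Real.rpow_pos_of_pos (by positivity) _
  calc |ε ^ 2 * (c * (Real.cos (ε * t) - 1) + ε * Real.cos (ε * t))|
        / (ε ^ 2 + 4 * S ^ 2 * (1 + ε * c)) ^ ((3:ℝ)/2)
      ≤ (ε ^ 3 * (1 + π * |t| / 2))
        / (ε ^ 3 * (((2:ℝ)/π^2) ^ ((3:ℝ)/2) * ((1 + t ^ 2) * Real.sqrt (1 + t ^ 2)))) := by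
        apply div_le_div₀ (by positivity) hnum (by positivity) hrpow
    _ = hopfBound t := by
        rw [hopfBound, mul_div_mul_left _ _ (by positivity : (ε:ℝ) ^ 3 ≠ 0)]

noncomputable def hopfL (t : ℝ) : ℝ := ((1 + t ^ 2) * Real.sqrt (1 + t ^ 2))⁻¹

lemma one_le_sqrt_one_add_sq (t : ℝ) : 1 ≤ Real.sqrt (1 + t ^ 2) := by
  have h := Real.sqrt_le_sqrt (show (1:ℝ) ≤ 1 + t ^ 2 by nlinarith)
  rwa [Real.sqrt_one] at h

lemma abs_le_sqrt_one_add_sq (t : ℝ) : |t| ≤ Real.sqrt (1 + t ^ 2) := by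
  rw [← Real.sqrt_sq_eq_abs]
  exact Real.sqrt_le_sqrt (by nlinarith)

lemma sqrt_one_add_sq_pos (t : ℝ) : 0 < Real.sqrt (1 + t ^ 2) :=
  Real.sqrt_pos.mpr (by positivity)

lemma hopfBound_nonneg (t : ℝ) : 0 ≤ hopfBound t := by
  have h1 := sqrt_one_add_sq_pos t
  have h2 : (0:ℝ) < ((2:ℝ)/π^2) ^ ((3:ℝ)/2) :=
    Real.rpow_pos_of_pos (by positivity) _
  have h3 : (0:ℝ) ≤ 1 + π * |t| / 2 := by positivity
  rw [hopfBound]; positivity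

lemma hopfBound_continuous : Continuous hopfBound := by
  have h2 : (0:ℝ) < ((2:ℝ)/π^2) ^ ((3:ℝ)/2) :=
    Real.rpow_pos_of_pos (by positivity) _
  apply Continuous.div
  · continuity
  · continuity
  · intro t
    have h1 := sqrt_one_add_sq_pos t
    positivity

lemma hopfBound_integrable : Integrable hopfBound := by
  have h2 : (0:ℝ) < ((2:ℝ)/π^2) ^ ((3:ℝ)/2) :=
    Real.rpow_pos_of_pos (by positivity) _
  set K := ((2:ℝ)/π^2) ^ ((3:ℝ)/2) with hK
  have key : ∀ t : ℝ, hopfBound t ≤ (K⁻¹ * (1 + π/2)) * (1 + t ^ 2)⁻¹ := by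
    intro t
    have hs1 := one_le_sqrt_one_add_sq t
    have hs2 := abs_le_sqrt_one_add_sq t
    have hπ : (3:ℝ) < π := Real.pi_gt_three
    rw [hopfBound, div_le_iff₀ (by positivity)]
    have expand : K⁻¹ * (1 + π/2) * (1 + t ^ 2)⁻¹ * (K * ((1 + t ^ 2) * Real.sqrt (1 + t ^ 2)))
        = (1 + π/2) * Real.sqrt (1 + t ^ 2) := by
      field_simp
    rw [expand]
    nlinarith
  refine (integrable_inv_one_add_sq.const_mul (K⁻¹ * (1 + π/2))).mono'
    hopfBound_continuous.aestronglyMeasurable (ae_of_all _ fun t => ?_)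
  rw [Real.norm_eq_abs, abs_of_nonneg (hopfBound_nonneg t)]
  exact key t

lemma hopfL_nonneg (t : ℝ) : 0 ≤ hopfL t := by
  have := sqrt_one_add_sq_pos t
  rw [hopfL]; positivity

lemma hopfL_continuous : Continuous hopfL := by
  apply Continuous.inv₀
  · continuity
  · intro t
    have := sqrt_one_add_sq_pos t
    positivity

lemma hopfL_integrable : Integrable hopfL := by
  refine integrable_inv_one_add_sq.mono'
    hopfL_continuous.aestronglyMeasurable (ae_of_all _ fun t => ?_)
  rw [Real.norm_eq_abs, abs_of_nonneg (hopfL_nonneg t)]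
  have hs1 := one_le_sqrt_one_add_sq t
  have hp : (0:ℝ) < 1 + t ^ 2 := by positivity
  rw [hopfL]
  apply inv_anti₀ hp
  nlinarith

lemma hopfL_hasDeriv (a : ℝ) :
    HasDerivAt (fun a : ℝ => a / Real.sqrt (1 + a ^ 2)) (hopfL a) a := by
  have hp : (0:ℝ) < 1 + a ^ 2 := by positivity
  have hsp := sqrt_one_add_sq_pos a
  have h1 : HasDerivAt (fun a : ℝ => 1 + a ^ 2) (2 * a) a := by
    simpa using (hasDerivAt_pow 2 a).const_add 1
  have h2 : HasDerivAt (fun a : ℝ => Real.sqrt (1 + a ^ 2))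
      (a / Real.sqrt (1 + a ^ 2)) a := by
    have h : HasDerivAt (fun a : ℝ => Real.sqrt (1 + a ^ 2))
        (1 / (2 * Real.sqrt (1 + a ^ 2)) * (2 * a)) a :=
      (Real.hasDerivAt_sqrt (ne_of_gt hp)).comp a h1
    convert h using 1
    field_simp
  have h3 : HasDerivAt (fun a : ℝ => a / Real.sqrt (1 + a ^ 2))
      ((1 * Real.sqrt (1 + a ^ 2) - a * (a / Real.sqrt (1 + a ^ 2)))
        / Real.sqrt (1 + a ^ 2) ^ 2) a :=
    (hasDerivAt_id a).div h2 (ne_of_gt hsp)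
  convert h3 using 1
  rw [hopfL, Real.sq_sqrt hp.le]
  field_simp
  rw [Real.sq_sqrt hp.le]
  ring

lemma integral_hopfL : ∫ t : ℝ, hopfL t = 2 := by
  have key : ∀ a : ℝ, ∫ t in (-a)..a, hopfL t
      = a / Real.sqrt (1 + a ^ 2) - (-a) / Real.sqrt (1 + (-a) ^ 2) := fun a =>
    intervalIntegral.integral_eq_sub_of_hasDerivAt (fun t _ => hopfL_hasDeriv t)
      (hopfL_integrable.intervalIntegrable)
  have h1 : Tendsto (fun a : ℝ => ∫ t in (-a)..a, hopfL t) atTop (𝓝 (∫ t, hopfL t)) :=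
    intervalIntegral_tendsto_integral hopfL_integrable
      tendsto_neg_atTop_atBot tendsto_id
  have h2 : Tendsto (fun a : ℝ => ∫ t in (-a)..a, hopfL t) atTop (𝓝 2) := by
    have h3 : Tendsto (fun a : ℝ => 2 * (Real.sqrt ((a⁻¹) ^ 2 + 1))⁻¹) atTop (𝓝 2) := by
      have hc : Continuous fun x : ℝ => Real.sqrt (x ^ 2 + 1) := by continuity
      have h4 : Tendsto (fun x : ℝ => Real.sqrt (x ^ 2 + 1)) (𝓝 0) (𝓝 1) := by
        have := hc.tendsto 0
        simpa using this
      have h5 := (h4.comp tendsto_inv_atTop_zero).inv₀ (by norm_num)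
      have h6 := h5.const_mul 2
      simpa using h6
    refine h3.congr' ?_
    filter_upwards [eventually_gt_atTop (0:ℝ)] with a ha
    have hsp := sqrt_one_add_sq_pos a
    have hsq : Real.sqrt ((a⁻¹) ^ 2 + 1) = Real.sqrt (1 + a ^ 2) / a := by
      rw [show (a⁻¹) ^ 2 + 1 = (1 + a ^ 2) / a ^ 2 by field_simp,
        Real.sqrt_div (by positivity) _, Real.sqrt_sq ha.le]
    rw [key a, hsq, show (1:ℝ) + (-a) ^ 2 = 1 + a ^ 2 by ring, inv_div]
    field_simp
    ring
  exact tendsto_nhds_unique h1 h2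

lemma hopfF_continuous {ε : ℝ} (hε : 0 < ε) (hε1 : ε ≤ 1) :
    Continuous fun p : ℝ × ℝ => hopfF ε p.1 p.2 := by
  unfold hopfF
  apply Continuous.div
  · fun_prop
  · apply Continuous.rpow_const
    · fun_prop
    · intro p; right; norm_num
  · intro p
    rw [hopf_den_eq]
    exact ne_of_gt (Real.rpow_pos_of_pos (hopf_base_pos hε hε1 _ _) _)

lemma hopf_inner_continuous {ε : ℝ} (hε : 0 < ε) (hε1 : ε ≤ 1) :
    Continuous fun t : ℝ => ∫ s in (-π)..π, hopfF ε t s :=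
  intervalIntegral.continuous_parametric_intervalIntegral_of_continuous'
    (f := fun t s => hopfF ε t s) (by exact hopfF_continuous hε hε1) _ _

lemma hopf_small_eventually (t : ℝ) :
    ∀ᶠ ε in 𝓝[>] (0:ℝ), 0 < ε ∧ ε ≤ 1/2 ∧ ε * |t| ≤ π ∧ ε * (|t| + 1) < π := by
  have hπ : (0:ℝ) < π := Real.pi_pos
  have hδ : (0:ℝ) < min (1/2) (π / (|t| + 1)) := by
    apply lt_min (by norm_num)
    positivity
  filter_upwards [Ioo_mem_nhdsGT_of_mem
    (Set.mem_Ico.mpr ⟨le_refl 0, hδ⟩)] with ε hε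
  obtain ⟨hε0, hεδ⟩ := hε
  have h1 : ε ≤ 1/2 := le_of_lt (lt_of_lt_of_le hεδ (min_le_left _ _))
  have h2 : ε < π / (|t| + 1) := lt_of_lt_of_le hεδ (min_le_right _ _)
  have h3 : ε * (|t| + 1) < π := by
    rw [← lt_div_iff₀ (by positivity : (0:ℝ) < |t| + 1)]
    exact h2
  have h4 : ε * |t| ≤ π := by nlinarith [abs_nonneg t]
  exact ⟨hε0, h1, h4, h3⟩

lemma hopf_inner_tendsto (t : ℝ) :
    Tendsto (fun ε : ℝ => ∫ s in (-π)..π, hopfF ε t s) (𝓝[>] 0)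
      (𝓝 ((2 * π) * hopfL t)) := by
  have h := intervalIntegral.tendsto_integral_filter_of_dominated_convergence
    (ι := ℝ) (l := 𝓝[>] (0:ℝ))
    (μ := volume) (a := -π) (b := π) (F := fun ε s => hopfF ε t s)
    (f := fun _ : ℝ => hopfL t) (bound := fun _ : ℝ => hopfBound t)
    ?_ ?_ ?_ ?_
  · have hval : ∫ _ in (-π)..π, (hopfL t : ℝ) = (2 * π) * hopfL t := by
      rw [intervalIntegral.integral_const, smul_eq_mul]
      ring_nf
    rwa [hval] at h
  · filter_upwards [hopf_small_eventually t] with ε hε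
    exact (((hopfF_continuous hε.1 (by linarith [hε.2.1])).comp
      (Continuous.prodMk_right t)).aestronglyMeasurable).restrict
  · filter_upwards [hopf_small_eventually t] with ε hε
    refine ae_of_all _ fun s _ => ?_
    rw [Real.norm_eq_abs]
    exact hopf_bound hε.1 hε.2.1 hε.2.2.1
  · exact intervalIntegrable_const
  · refine ae_of_all _ fun s _ => ?_
    exact hopf_pointwise t s

theorem gauss_linking_integral_hopf_link_tendsto_one' :
    Tendsto (fun ε : ℝ => (1 / (4 * π)) *
        ∫ t in (-(π / ε))..(π / ε), ∫ s in (-π)..π, hopfF ε t s)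
      (𝓝[>] 0) (𝓝 1) := by
  have hπ : (0:ℝ) < π := Real.pi_pos
  have houter : Tendsto (fun ε : ℝ => ∫ t : ℝ,
        (Set.Ioc (-(π / ε)) (π / ε)).indicator (fun t => ∫ s in (-π)..π, hopfF ε t s) t)
      (𝓝[>] 0) (𝓝 (∫ t : ℝ, (2 * π) * hopfL t)) := by
    apply MeasureTheory.tendsto_integral_filter_of_dominated_convergence
      (bound := fun t => (2 * π) * hopfBound t)
    · filter_upwards [Ioo_mem_nhdsGT_of_mem
        (Set.mem_Ico.mpr ⟨le_refl (0:ℝ), by norm_num⟩ : (0:ℝ) ∈ Set.Ico (0:ℝ) 1)] with ε hε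
      exact ((hopf_inner_continuous hε.1 hε.2.le).aestronglyMeasurable).indicator
        measurableSet_Ioc
    · filter_upwards [Ioo_mem_nhdsGT_of_mem
        (Set.mem_Ico.mpr ⟨le_refl (0:ℝ), by norm_num⟩ : (0:ℝ) ∈ Set.Ico (0:ℝ) (1/2))] with ε hε
      refine ae_of_all _ fun t => ?_
      by_cases hmem : t ∈ Set.Ioc (-(π / ε)) (π / ε)
      · rw [Set.indicator_of_mem hmem]
        have htb : ε * |t| ≤ π := by
          obtain ⟨hl, hr⟩ := hmem
          have h1 : |t| ≤ π / ε := abs_le.mpr ⟨by linarith, hr⟩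
          calc ε * |t| ≤ ε * (π / ε) := mul_le_mul_of_nonneg_left h1 hε.1.le
            _ = π := by rw [mul_div_cancel₀ _ (ne_of_gt hε.1)]
        have hb := intervalIntegral.norm_integral_le_of_norm_le_const
          (C := hopfBound t) (f := fun s => hopfF ε t s) (a := -π) (b := π)
          (fun s _ => by rw [Real.norm_eq_abs]; exact hopf_bound hε.1 hε.2.le htb)
        rw [Real.norm_eq_abs] at hb ⊢
        calc |∫ s in (-π)..π, hopfF ε t s| ≤ hopfBound t * |π - (-π)| := hb
          _ = (2 * π) * hopfBound t := by
              rw [abs_of_pos (by linarith : (0:ℝ) < π - (-π))]; ring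
      · rw [Set.indicator_of_notMem hmem]
        simp only [norm_zero]
        have := hopfBound_nonneg t
        positivity
    · exact hopfBound_integrable.const_mul (2 * π)
    · refine ae_of_all _ fun t => ?_
      refine (hopf_inner_tendsto t).congr' ?_
      filter_upwards [hopf_small_eventually t] with ε hε
      have hmem : t ∈ Set.Ioc (-(π / ε)) (π / ε) := by
        obtain ⟨hε0, -, -, h3⟩ := hε
        have h4 : |t| + 1 < π / ε := by
          rw [lt_div_iff₀ hε0]; linarith [h3]
        constructor
        · have := abs_nonneg t
          have := neg_abs_le t
          linarith
        · have := le_abs_self t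
          linarith
      rw [Set.indicator_of_mem hmem]
  have hlimval : ∫ t : ℝ, (2 * π) * hopfL t = 4 * π := by
    rw [MeasureTheory.integral_const_mul, integral_hopfL]; ring
  rw [hlimval] at houter
  have hfinal := houter.const_mul (1 / (4 * π))
  have h1 : (1 / (4 * π)) * (4 * π) = 1 := by field_simp
  rw [h1] at hfinal
  refine hfinal.congr' ?_
  filter_upwards [self_mem_nhdsWithin] with ε (hε : 0 < ε)
  have hle : -(π / ε) ≤ π / ε := by
    have : 0 < π / ε := by positivity
    linarith
  rw [MeasureTheory.integral_indicator measurableSet_Ioc,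
    ← intervalIntegral.integral_of_le hle]

theorem gauss_linking_integral_hopf_link_tendsto_one :
    Tendsto (fun ε : ℝ => (1 / (4 * π)) *
        ∫ t in (-(π / ε))..(π / ε), ∫ s in (-π)..π,
          ε ^ 2 * (Real.cos s * (Real.cos (ε * t) - 1) + ε * Real.cos (ε * t))
            / (2 + ε ^ 2 - 2 * Real.cos (ε * t)
                + 4 * ε * Real.cos s * Real.sin (ε * t / 2) ^ 2) ^ ((3 : ℝ) / 2))
      (𝓝[>] 0) (𝓝 1) :=
  gauss_linking_integral_hopf_link_tendsto_one'
end

section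
/- Fix ε > 0 and let γ₁(t) = (t, 1, 0) be a straight line and γ₂(s) = (0, 1 + ε cos s, ε sin s) a circle of radius ε centered at (0,1,0) in the plane x = 0. Then the Gauss linking integral (1/(4π)) ∫_{−∞}^{∞} ∫₀^{2π} ((γ₁'(t) × γ₂'(s)) · (γ₁(t) − γ₂(s))) / ‖γ₁(t) − γ₂(s)‖³ ds dt equals 1. -/
open Real MeasureTheory
open scoped RealInnerProductSpace

section Aux

open Filter Topology

private lemma gauss_deriv_line (t : ℝ) :
    deriv (fun t : ℝ => vec3 t 1 0) t = vec3 1 0 0 := by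
  have h : (fun t : ℝ => vec3 t 1 0) = fun t : ℝ => t • vec3 1 0 0 + vec3 0 1 0 := by
    funext t; ext i; fin_cases i <;> simp [vec3, PiLp.add_apply, PiLp.smul_apply]
  rw [h]
  have : HasDerivAt (fun t : ℝ => t • vec3 1 0 0 + vec3 0 1 0)
      ((1:ℝ) • vec3 1 0 0) t := ((hasDerivAt_id t).smul_const _).add_const _
  simpa using this.deriv

private lemma gauss_deriv_circle (ε s : ℝ) :
    deriv (fun s : ℝ => vec3 0 (1 + ε * Real.cos s) (ε * Real.sin s)) s
      = vec3 0 (-(ε * Real.sin s)) (ε * Real.cos s) := by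
  have h : (fun s : ℝ => vec3 0 (1 + ε * Real.cos s) (ε * Real.sin s))
      = fun s : ℝ => (vec3 0 1 0 + (ε * Real.cos s) • vec3 0 1 0)
          + (ε * Real.sin s) • vec3 0 0 1 := by
    funext s; ext i; fin_cases i <;> simp [vec3, PiLp.add_apply, PiLp.smul_apply]
  rw [h]
  have h2 : HasDerivAt (fun s : ℝ => ε * Real.cos s) (ε * (-Real.sin s)) s :=
    (Real.hasDerivAt_cos s).const_mul ε
  have h3 : HasDerivAt (fun s : ℝ => ε * Real.sin s) (ε * Real.cos s) s :=
    (Real.hasDerivAt_sin s).const_mul ε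
  have : HasDerivAt (fun s : ℝ => (vec3 0 1 0 + (ε * Real.cos s) • vec3 0 1 0)
          + (ε * Real.sin s) • vec3 0 0 1)
      (((ε * (-Real.sin s)) • vec3 0 1 0) + (ε * Real.cos s) • vec3 0 0 1) s :=
    ((h2.smul_const _).const_add _).add (h3.smul_const _)
  rw [this.deriv]
  ext i; fin_cases i <;> simp [vec3, PiLp.add_apply, PiLp.smul_apply]

private lemma gauss_integrand_eq (ε : ℝ) (hε : 0 < ε) (t s : ℝ) :
    ⟪cross3 (deriv (fun t : ℝ => vec3 t 1 0) t)
        (deriv (fun s : ℝ => vec3 0 (1 + ε * Real.cos s) (ε * Real.sin s)) s),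
      vec3 t 1 0 - vec3 0 (1 + ε * Real.cos s) (ε * Real.sin s)⟫
      / ‖vec3 t 1 0 - vec3 0 (1 + ε * Real.cos s) (ε * Real.sin s)‖ ^ 3
      = ε ^ 2 / Real.sqrt (t ^ 2 + ε ^ 2) ^ 3 := by
  rw [gauss_deriv_line, gauss_deriv_circle]
  have hsub : vec3 t 1 0 - vec3 0 (1 + ε * Real.cos s) (ε * Real.sin s)
      = vec3 t (-(ε * Real.cos s)) (-(ε * Real.sin s)) := by
    ext i; fin_cases i <;> simp [vec3, PiLp.sub_apply]
  rw [hsub]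
  have hcross : cross3 (vec3 1 0 0) (vec3 0 (-(ε * Real.sin s)) (ε * Real.cos s))
      = vec3 0 (-(ε * Real.cos s)) (-(ε * Real.sin s)) := by
    ext i; fin_cases i <;> simp [cross3, vec3]
  rw [hcross]
  have hinner : ⟪vec3 0 (-(ε * Real.cos s)) (-(ε * Real.sin s)),
      vec3 t (-(ε * Real.cos s)) (-(ε * Real.sin s))⟫ = ε ^ 2 := by
    simp [PiLp.inner_apply, Fin.sum_univ_three, RCLike.inner_apply, vec3]
    nlinarith [Real.sin_sq_add_cos_sq s]
  have hnorm : ‖vec3 t (-(ε * Real.cos s)) (-(ε * Real.sin s))‖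
      = Real.sqrt (t ^ 2 + ε ^ 2) := by
    rw [show (t ^ 2 + ε ^ 2) = t ^ 2 + ((-(ε * Real.cos s)) ^ 2 + (-(ε * Real.sin s)) ^ 2) by
      nlinarith [Real.sin_sq_add_cos_sq s]]
    simp [EuclideanSpace.norm_eq, Fin.sum_univ_three, vec3, sq_abs]
    ring_nf
  rw [hinner, hnorm]

private lemma gauss_hasDerivAt_F (ε : ℝ) (hε : 0 < ε) (t : ℝ) :
    HasDerivAt (fun t : ℝ => t / Real.sqrt (t ^ 2 + ε ^ 2))
      (ε ^ 2 / Real.sqrt (t ^ 2 + ε ^ 2) ^ 3) t := by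
  have hpos : 0 < t ^ 2 + ε ^ 2 := by positivity
  have hd : 0 < Real.sqrt (t ^ 2 + ε ^ 2) := Real.sqrt_pos.2 hpos
  have hsq : Real.sqrt (t ^ 2 + ε ^ 2) ^ 2 = t ^ 2 + ε ^ 2 := Real.sq_sqrt hpos.le
  have h1 : HasDerivAt (fun t : ℝ => t ^ 2 + ε ^ 2) (2 * t) t := by
    simpa using ((hasDerivAt_pow 2 t).add_const (ε ^ 2))
  have h2 : HasDerivAt (fun t : ℝ => Real.sqrt (t ^ 2 + ε ^ 2))
      (1 / (2 * Real.sqrt (t ^ 2 + ε ^ 2)) * (2 * t)) t :=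
    (Real.hasDerivAt_sqrt hpos.ne').comp t h1
  have h3 := (hasDerivAt_id t).div h2 hd.ne'
  convert h3 using 1
  · rfl
  · rfl
  · rfl
  have hnum : 1 * Real.sqrt (t ^ 2 + ε ^ 2)
      - id t * (1 / (2 * Real.sqrt (t ^ 2 + ε ^ 2)) * (2 * t))
      = ε ^ 2 / Real.sqrt (t ^ 2 + ε ^ 2) := by
    simp only [id]
    field_simp
    linear_combination hsq
  rw [hnum, div_div]
  congr 1
  ring

private lemma gauss_tendsto_F_top (ε : ℝ) (hε : 0 < ε) :
    Filter.Tendsto (fun t : ℝ => t / Real.sqrt (t ^ 2 + ε ^ 2)) atTop (𝓝 1) := by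
  have h0 : Filter.Tendsto (fun t : ℝ => ε ^ 2 / t ^ 2) atTop (𝓝 0) :=
    tendsto_const_nhds.div_atTop (tendsto_pow_atTop two_ne_zero)
  have h1 : Filter.Tendsto (fun t : ℝ => 1 + ε ^ 2 / t ^ 2) atTop (𝓝 1) := by
    simpa using tendsto_const_nhds.add h0
  have h2 : Filter.Tendsto (fun t : ℝ => Real.sqrt (1 + ε ^ 2 / t ^ 2)) atTop (𝓝 1) := by
    have := (Real.continuous_sqrt.tendsto 1).comp h1
    simpa [Function.comp_def] using this
  have h3 : Filter.Tendsto (fun t : ℝ => 1 / Real.sqrt (1 + ε ^ 2 / t ^ 2)) atTop (𝓝 1) := by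
    simpa using h2.inv₀ one_ne_zero
  apply h3.congr'
  filter_upwards [eventually_gt_atTop (0 : ℝ)] with t ht
  have h4 : Real.sqrt (t ^ 2 + ε ^ 2) = t * Real.sqrt (1 + ε ^ 2 / t ^ 2) := by
    rw [show t ^ 2 + ε ^ 2 = t ^ 2 * (1 + ε ^ 2 / t ^ 2) by field_simp,
      Real.sqrt_mul (by positivity), Real.sqrt_sq ht.le]
  rw [h4]
  have h5 : Real.sqrt (1 + ε ^ 2 / t ^ 2) ≠ 0 := by positivity
  field_simp

private lemma gauss_tendsto_F_bot (ε : ℝ) (hε : 0 < ε) :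
    Filter.Tendsto (fun t : ℝ => t / Real.sqrt (t ^ 2 + ε ^ 2)) atBot (𝓝 (-1)) := by
  have := ((gauss_tendsto_F_top ε hε).comp tendsto_neg_atBot_atTop).neg
  simp only [Function.comp] at this
  apply this.congr
  intro t
  simp [neg_sq, neg_div]

private lemma gauss_integrable (ε : ℝ) (hε : 0 < ε) :
    Integrable (fun t : ℝ => ε ^ 2 / Real.sqrt (t ^ 2 + ε ^ 2) ^ 3) := by
  have hIoi : IntegrableOn (fun t : ℝ => ε ^ 2 / Real.sqrt (t ^ 2 + ε ^ 2) ^ 3) (Set.Ioi 0) :=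
    integrableOn_Ioi_deriv_of_nonneg' (fun x _ => gauss_hasDerivAt_F ε hε x)
      (fun x _ => by positivity) (gauss_tendsto_F_top ε hε)
  have hIci : IntegrableOn (fun t : ℝ => ε ^ 2 / Real.sqrt (t ^ 2 + ε ^ 2) ^ 3) (Set.Ici 0) := by
    rwa [integrableOn_Ici_iff_integrableOn_Ioi]
  have hIic : IntegrableOn (fun t : ℝ => ε ^ 2 / Real.sqrt (t ^ 2 + ε ^ 2) ^ 3) (Set.Iic 0) := by
    have := (MeasurePreserving.integrableOn_comp_preimage
      (Measure.measurePreserving_neg (volume : Measure ℝ))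
      (Homeomorph.neg ℝ).measurableEmbedding).2 hIci
    have h2 : (fun x : ℝ => ε ^ 2 / Real.sqrt ((-x) ^ 2 + ε ^ 2) ^ 3)
        = fun t : ℝ => ε ^ 2 / Real.sqrt (t ^ 2 + ε ^ 2) ^ 3 := by
      funext x; rw [neg_sq]
    simpa [Function.comp_def, h2] using this
  have h := hIic.union hIoi
  rw [Set.Iic_union_Ioi] at h
  exact integrableOn_univ.1 h

private lemma gauss_integral_eq_two (ε : ℝ) (hε : 0 < ε) :
    ∫ t : ℝ, ε ^ 2 / Real.sqrt (t ^ 2 + ε ^ 2) ^ 3 = 2 := by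
  have := integral_of_hasDerivAt_of_tendsto (fun x => gauss_hasDerivAt_F ε hε x)
    (gauss_integrable ε hε) (gauss_tendsto_F_bot ε hε) (gauss_tendsto_F_top ε hε)
  rw [this]; norm_num

end Aux

theorem gauss_linking_integral_line_and_circle (ε : ℝ) (hε : 0 < ε)
    (γ₁ : ℝ → EuclideanSpace ℝ (Fin 3)) (γ₂ : ℝ → EuclideanSpace ℝ (Fin 3))
    (hγ₁ : γ₁ = fun t => vec3 t 1 0)
    (hγ₂ : γ₂ = fun s => vec3 0 (1 + ε * Real.cos s) (ε * Real.sin s)) :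
    (1 / (4 * π)) * ∫ t : ℝ, ∫ s in (0 : ℝ)..(2 * π),
        ⟪cross3 (deriv γ₁ t) (deriv γ₂ s), γ₁ t - γ₂ s⟫ / ‖γ₁ t - γ₂ s‖ ^ 3 = 1 := by
  subst hγ₁ hγ₂
  have key : ∀ t : ℝ, (∫ s in (0 : ℝ)..(2 * π),
      ⟪cross3 (deriv (fun t => vec3 t 1 0) t)
          (deriv (fun s => vec3 0 (1 + ε * Real.cos s) (ε * Real.sin s)) s),
        (fun t => vec3 t 1 0) t - (fun s => vec3 0 (1 + ε * Real.cos s) (ε * Real.sin s)) s⟫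
        / ‖(fun t => vec3 t 1 0) t - (fun s => vec3 0 (1 + ε * Real.cos s) (ε * Real.sin s)) s‖ ^ 3)
      = (2 * π) * (ε ^ 2 / Real.sqrt (t ^ 2 + ε ^ 2) ^ 3) := by
    intro t
    rw [intervalIntegral.integral_congr
      (g := fun _ => ε ^ 2 / Real.sqrt (t ^ 2 + ε ^ 2) ^ 3)
      (fun s _ => gauss_integrand_eq ε hε t s)]
    rw [intervalIntegral.integral_const]
    simp [smul_eq_mul]
  rw [integral_congr_ae (ae_of_all _ key), integral_const_mul, gauss_integral_eq_two ε hε]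
  have hπ : π ≠ 0 := Real.pi_ne_zero
  field_simp
  ring
end

section
/- Let F(s, t) = −arctan(st/√(1 + s² + t²)). Then for all real numbers a, b, c, d, the iterated integral ∫_c^d ∫_a^b −1/(1 + s² + t²)^{3/2} ds dt equals F(b, d) − F(a, d) − F(b, c) + F(a, c). -/
open Real

/-- The mixed antiderivative `F(s, t) = -arctan (s t / √(1 + s² + t²))` of the Gauss
linking integrand of two perpendicular skew lines. -/
noncomputable def F (s t : ℝ) : ℝ := -Real.arctan (s * t / Real.sqrt (1 + s ^ 2 + t ^ 2))

noncomputable def G (s t : ℝ) : ℝ := -s / ((1 + t ^ 2) * Real.sqrt (1 + s ^ 2 + t ^ 2))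

lemma qpos (s t : ℝ) : 0 < 1 + s ^ 2 + t ^ 2 := by positivity

lemma rpow32 (s t : ℝ) :
    (1 + s ^ 2 + t ^ 2) ^ ((3 : ℝ) / 2)
      = (1 + s ^ 2 + t ^ 2) * Real.sqrt (1 + s ^ 2 + t ^ 2) := by
  have hq := qpos s t
  rw [show (3 : ℝ) / 2 = 1 + 1 / 2 by ring, Real.rpow_add hq, Real.rpow_one,
    ← Real.sqrt_eq_rpow]

lemma hasDerivAt_sqrtq (t s : ℝ) :
    HasDerivAt (fun s => Real.sqrt (1 + s ^ 2 + t ^ 2))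
      (s / Real.sqrt (1 + s ^ 2 + t ^ 2)) s := by
  have hq := qpos s t
  have h1 : HasDerivAt (fun s : ℝ => 1 + s ^ 2 + t ^ 2) (2 * s) s := by
    simpa using ((hasDerivAt_pow 2 s).const_add 1).add_const (t ^ 2)
  have := (Real.hasDerivAt_sqrt hq.ne').comp s h1
  refine this.congr_deriv ?_
  symm
  have hs : Real.sqrt (1 + s ^ 2 + t ^ 2) ≠ 0 := by positivity
  field_simp

lemma hasDerivAt_G (t s : ℝ) :
    HasDerivAt (fun s => G s t) (-1 / (1 + s ^ 2 + t ^ 2) ^ ((3 : ℝ) / 2)) s := by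
  have hq := qpos s t
  have hsq : (0 : ℝ) < Real.sqrt (1 + s ^ 2 + t ^ 2) := Real.sqrt_pos.mpr hq
  have hden : (1 + t ^ 2) * Real.sqrt (1 + s ^ 2 + t ^ 2) ≠ 0 := by positivity
  have hnum : HasDerivAt (fun s : ℝ => -s) (-1) s := (hasDerivAt_id s).neg
  have hdd : HasDerivAt (fun s => (1 + t ^ 2) * Real.sqrt (1 + s ^ 2 + t ^ 2))
      ((1 + t ^ 2) * (s / Real.sqrt (1 + s ^ 2 + t ^ 2))) s :=
    (hasDerivAt_sqrtq t s).const_mul _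
  have := hnum.div hdd hden
  refine this.congr_deriv ?_
  symm
  rw [rpow32]
  have h2 : Real.sqrt (1 + s ^ 2 + t ^ 2) * Real.sqrt (1 + s ^ 2 + t ^ 2)
      = 1 + s ^ 2 + t ^ 2 := Real.mul_self_sqrt hq.le
  field_simp
  linear_combination (s ^ 2) * h2

lemma hasDerivAt_F (s t : ℝ) : HasDerivAt (fun t => F s t) (G s t) t := by
  have hq := qpos s t
  have hsq : (0 : ℝ) < Real.sqrt (1 + s ^ 2 + t ^ 2) := Real.sqrt_pos.mpr hq
  have h2 : Real.sqrt (1 + s ^ 2 + t ^ 2) * Real.sqrt (1 + s ^ 2 + t ^ 2)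
      = 1 + s ^ 2 + t ^ 2 := Real.mul_self_sqrt hq.le
  have hsqrt : HasDerivAt (fun t => Real.sqrt (1 + s ^ 2 + t ^ 2))
      (t / Real.sqrt (1 + s ^ 2 + t ^ 2)) t := by
    have h1 : HasDerivAt (fun t : ℝ => 1 + s ^ 2 + t ^ 2) (2 * t) t := by
      simpa using ((hasDerivAt_pow 2 t).const_add (1 + s ^ 2))
    have := (Real.hasDerivAt_sqrt hq.ne').comp t h1
    refine this.congr_deriv ?_
    symm
    field_simp
  have hnum : HasDerivAt (fun t : ℝ => s * t) s t := by
    simpa using (hasDerivAt_id t).const_mul s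
  have hu : HasDerivAt (fun t => s * t / Real.sqrt (1 + s ^ 2 + t ^ 2))
      ((s * Real.sqrt (1 + s ^ 2 + t ^ 2)
        - s * t * (t / Real.sqrt (1 + s ^ 2 + t ^ 2)))
        / Real.sqrt (1 + s ^ 2 + t ^ 2) ^ 2) t := hnum.div hsqrt hsq.ne'
  have harctan := (Real.hasDerivAt_arctan
      (s * t / Real.sqrt (1 + s ^ 2 + t ^ 2))).comp t hu
  have := harctan.neg
  refine this.congr_deriv ?_
  symm
  unfold G
  rw [div_pow, Real.sq_sqrt hq.le]
  field_simp
  linear_combination (s * (1 + t ^ 2)) * h2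
lemma contG (s : ℝ) : Continuous (fun t => G s t) := by
  unfold G
  have h : ∀ t : ℝ, (1 + t ^ 2) * Real.sqrt (1 + s ^ 2 + t ^ 2) ≠ 0 := by
    intro t; have := qpos s t; positivity
  exact continuous_const.div (by continuity) h

lemma inner_integral (a b t : ℝ) :
    (∫ s in a..b, -1 / (1 + s ^ 2 + t ^ 2) ^ ((3 : ℝ) / 2)) = G b t - G a t := by
  apply intervalIntegral.integral_eq_sub_of_hasDerivAt
  · intro s _
    exact hasDerivAt_G t s
  · apply Continuous.intervalIntegrable
    apply Continuous.div continuous_const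
    · apply Continuous.rpow_const
      · exact (continuous_const.add (continuous_pow 2)).add continuous_const
      · intro s
        exact Or.inr (by norm_num)
    · intro s
      have := (qpos s t)
      exact (Real.rpow_pos_of_pos this _).ne'

theorem rectangle_formula (a b c d : ℝ) :
    ∫ t in c..d, ∫ s in a..b, -1 / (1 + s ^ 2 + t ^ 2) ^ ((3 : ℝ) / 2)
      = F b d - F a d - F b c + F a c := by
  have h1 : ∀ t, (∫ s in a..b, -1 / (1 + s ^ 2 + t ^ 2) ^ ((3 : ℝ) / 2))
      = G b t - G a t := inner_integral a b
  rw [intervalIntegral.integral_congr (fun t _ => h1 t)]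
  have : (∫ t in c..d, (G b t - G a t)) = (F b d - F a d) - (F b c - F a c) := by
    apply intervalIntegral.integral_eq_sub_of_hasDerivAt
      (f := fun t => F b t - F a t)
    · intro t _
      exact (hasDerivAt_F b t).sub (hasDerivAt_F a t)
    · exact (Continuous.intervalIntegrable (by exact (contG b).sub (contG a)) c d)
  rw [this]; ring
end
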